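/- For every real x > 3/2, 2·h(x) ≤ (2x)^{log₃(√2+1)}. -/

import Mathlib

/-- The piecewise linear function connecting `(0,0)` and the points
`(3^n/2, (√2+1)^n/2)` for `n ≥ 1`. On `[3^n/2, 3^(n+1)/2]` it is given by the
affine formula below. -/
noncomputable def h (x : ℝ) : ℝ :=
  if x ≤ 3 / 2 then (Real.sqrt 2 + 1) / 3 * x
  else
    let n : ℕ := (⌊Real.logb 3 (2 * x)⌋).toNat
    Real.sqrt 2 / 2 * ((Real.sqrt 2 + 1) / 3) ^ n * x
      + (Real.sqrt 2 + 1) ^ n * (2 - Real.sqrt 2) / 4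

theorem h_le_rpow :
    ∀ x : ℝ, 3 / 2 < x →
      2 * h x ≤ (2 * x) ^ Real.logb 3 (Real.sqrt 2 + 1) := by
  intro x hx
  have hb : (1:ℝ) < 3 := by norm_num
  set s := Real.sqrt 2 with hs
  have hs1 : 1 < s := by
    rw [hs]
    nlinarith [Real.sq_sqrt (by norm_num : (2:ℝ) ≥ 0),
      Real.sqrt_nonneg 2, Real.sqrt_lt_sqrt (by norm_num) (by norm_num : (1:ℝ) < 2),
      Real.sqrt_one]
  have hs2 : s < 2 := by
    rw [hs]
    nlinarith [Real.sq_sqrt (by norm_num : (2:ℝ) ≥ 0), Real.sqrt_nonneg 2]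
  set α := Real.logb 3 (s + 1) with hα
  have hα0 : 0 < α := Real.logb_pos hb (by linarith)
  have hα1 : α < 1 := by
    have := (Real.logb_lt_iff_lt_rpow hb (by linarith : (0:ℝ) < s + 1)).mpr
      (by rw [Real.rpow_one]; linarith)
    exact this
  have h3α : (3:ℝ) ^ α = s + 1 := Real.rpow_logb (by norm_num) (by norm_num) (by linarith)
  -- unfold h
  rw [h, if_neg (not_le.mpr hx)]
  set n : ℕ := (⌊Real.logb 3 (2 * x)⌋).toNat with hn
  have h2x : (3:ℝ) < 2 * x := by linarith
  have hlog1 : (1:ℝ) < Real.logb 3 (2 * x) := by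
    rw [show (1:ℝ) = Real.logb 3 3 by simp]
    exact Real.logb_lt_logb hb (by norm_num) h2x
  have hfloor : (1:ℤ) ≤ ⌊Real.logb 3 (2 * x)⌋ := by
    exact_mod_cast Int.le_floor.mpr (by exact_mod_cast hlog1.le)
  have hncast : (n:ℝ) = (⌊Real.logb 3 (2 * x)⌋ : ℤ) := by
    rw [hn]; exact_mod_cast Int.toNat_of_nonneg (by linarith)
  have hlo : (3:ℝ) ^ (n:ℕ) ≤ 2 * x := by
    have : ((n:ℝ)) ≤ Real.logb 3 (2 * x) := by
      rw [hncast]; exact Int.floor_le _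
    have := (Real.le_logb_iff_rpow_le hb (by linarith : (0:ℝ) < 2 * x)).mp this
    rwa [Real.rpow_natCast] at this
  have hhi : 2 * x ≤ (3:ℝ) ^ (n + 1 : ℕ) := by
    have : Real.logb 3 (2 * x) < (n:ℝ) + 1 := by
      rw [hncast]
      have := Int.lt_floor_add_one (Real.logb 3 (2 * x))
      push_cast at this ⊢; linarith
    have := (Real.logb_lt_iff_lt_rpow hb (by linarith : (0:ℝ) < 2 * x)).mp this
    rw [show ((n:ℝ) + 1) = ((n+1 : ℕ) : ℝ) by push_cast; ring, Real.rpow_natCast] at this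
    exact this.le
  -- concavity
  have hcv := Real.concaveOn_rpow hα0.le hα1.le
  set A : ℝ := (3:ℝ) ^ (n:ℕ)
  set B : ℝ := (3:ℝ) ^ (n+1:ℕ)
  have hA : 0 < A := by positivity
  have hBA : B = 3 * A := by simp [A, B, pow_succ]; ring
  set a : ℝ := (B - 2 * x) / (2 * A)
  set b : ℝ := (2 * x - A) / (2 * A)
  have ha : 0 ≤ a := by apply div_nonneg; linarith; linarith
  have hb' : 0 ≤ b := by apply div_nonneg; linarith; linarith
  have hab : a + b = 1 := by
    simp only [a, b]; rw [← add_div, hBA, div_eq_one_iff_eq (by positivity)]; ring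
  have hkey := hcv.2 (Set.mem_Ici.mpr hA.le) (Set.mem_Ici.mpr (by positivity : (0:ℝ) ≤ B))
    ha hb' hab
  have hcomb : a • A + b • B = 2 * x := by
    simp only [smul_eq_mul, a, b]
    field_simp
    rw [hBA]; ring
  rw [hcomb] at hkey
  have hgen : ∀ m : ℕ, ((3:ℝ) ^ m) ^ α = (s + 1) ^ m := by
    intro m
    rw [← Real.rpow_natCast 3 m, ← Real.rpow_mul (by norm_num), mul_comm,
      Real.rpow_mul (by norm_num), h3α, Real.rpow_natCast]
  have hAα : A ^ α = (s + 1) ^ (n:ℕ) := hgen n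
  have hBα : B ^ α = (s + 1) ^ (n+1:ℕ) := hgen (n+1)
  calc 2 * (s / 2 * ((s + 1) / 3) ^ n * x + (s + 1) ^ n * (2 - s) / 4)
      = a • (A ^ α) + b • (B ^ α) := by
        rw [hAα, hBα]
        simp only [smul_eq_mul, a, b, hBA]
        have hA' : A ≠ 0 := hA.ne'
        have : ((s + 1) / 3) ^ n = (s+1)^n / A := by
          rw [div_pow]
        rw [this]
        field_simp
        ring_nf
    _ ≤ (2 * x) ^ α := hkey
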